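/- Let C be a category with a class W of weak equivalences containing all isomorphisms and satisfying 2-out-of-3, such that the localization γ : A → A[W_A⁻¹] exists. Let N : B ⇄ A : F be functors, define W_B = N⁻¹(W_A), and let B̃ ⊆ A[W_A⁻¹] be the full subcategory on objects N(B), B ∈ B, so γ∘N factors as j∘δ with j : B̃ → A[W_A⁻¹] the inclusion. If there are zig-zags of natural weak equivalences Id ⇝ N∘F and Id ⇝ F∘N, then j is an equivalence of categories and δ : B → B̃ is a localization of B at W_B up to equivalence: every functor H : B → D inverting W_B factors through δ up to natural isomorphism, uniquely up to natural isomorphism. -/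

import Mathlib

open CategoryTheory

universe w u v u' v' u'' v''

/-- A zig-zag of natural weak equivalences between two functors `F, G : X ⥤ Y`:
a finite chain of functors connected by natural transformations (in either direction),
each of whose components lies in `W`. -/
def ZigzagWE {X : Type u} [Category.{v} X] {Y : Type u'} [Category.{v'} Y]
    (W : MorphismProperty Y) (F G : X ⥤ Y) : Prop :=
  Relation.ReflTransGen
    (fun F' G' : X ⥤ Y =>
      (∃ α : F' ⟶ G', ∀ x, W (α.app x)) ∨ (∃ α : G' ⟶ F', ∀ x, W (α.app x)))
    F G

lemma ZigzagWE.isoComp {X : Type*} [Category X] {Y : Type*} [Category Y] {E : Type*} [Category E]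
    {W : MorphismProperty Y} {G G' : X ⥤ Y} (h : ZigzagWE W G G')
    (K : Y ⥤ E) (hK : ∀ ⦃a b : Y⦄ (f : a ⟶ b), W f → IsIso (K.map f)) :
    Nonempty (G ⋙ K ≅ G' ⋙ K) := by
  induction h with
  | refl => exact ⟨Iso.refl _⟩
  | tail _ hstep ih =>
    obtain ⟨e⟩ := ih
    rcases hstep with ⟨α, hα⟩ | ⟨α, hα⟩
    · haveI : ∀ x, IsIso ((Functor.whiskerRight α K).app x) := fun x => hK _ (hα x)
      haveI := NatIso.isIso_of_isIso_app (Functor.whiskerRight α K)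
      exact ⟨e.trans (asIso (Functor.whiskerRight α K))⟩
    · haveI : ∀ x, IsIso ((Functor.whiskerRight α K).app x) := fun x => hK _ (hα x)
      haveI := NatIso.isIso_of_isIso_app (Functor.whiskerRight α K)
      exact ⟨e.trans (asIso (Functor.whiskerRight α K)).symm⟩

lemma ZigzagWE.map_mem {X : Type*} [Category X] {Y : Type*} [Category Y]
    {W : MorphismProperty Y} [W.HasTwoOutOfThreeProperty]
    {G G' : X ⥤ Y} (h : ZigzagWE W G G') {a b : X} (f : a ⟶ b)
    (hf : W (G.map f)) : W (G'.map f) := by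
  induction h with
  | refl => exact hf
  | @tail G₁ G₂ _ hstep ih =>
    rcases hstep with ⟨α, hα⟩ | ⟨α, hα⟩
    · have hcomp : W (α.app a ≫ G₂.map f) := by
        rw [← α.naturality f]
        exact W.comp_mem _ _ ih (hα b)
      exact W.of_precomp _ _ (hα a) hcomp
    · have hcomp : W (G₂.map f ≫ α.app b) := by
        rw [α.naturality f]
        exact W.comp_mem _ _ (hα a) ih
      exact W.of_postcomp _ _ (hα b) hcomp

variable {A : Type u} [Category.{v} A] {B : Type u'} [Category.{v'} B]
  {A' : Type u''} [Category.{v''} A']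

/-- The full subcategory `B̃` of the localization `A[W⁻¹]` on the objects coming from `B`. -/
abbrev ImageSubcat (γ : A ⥤ A') (N : B ⥤ A) : Type u'' :=
  ObjectProperty.FullSubcategory fun a : A' => ∃ b : B, (N ⋙ γ).obj b = a

/-- The factorization `δ : B → B̃` of `γ ∘ N` through the full subcategory `B̃`. -/
def deltaFunctor (γ : A ⥤ A') (N : B ⥤ A) : B ⥤ ImageSubcat γ N :=
  ObjectProperty.lift _ (N ⋙ γ) fun b => ⟨b, rfl⟩

/-- Proposition C.4: Let `W` be a class of weak equivalences on `A` containing all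
isomorphisms and satisfying 2-out-of-3, with localization `γ : A → A[W⁻¹]`.  Given
functors `N : B → A` and `F : A → B`, let `W_B = N⁻¹(W)`, let `B̃ ⊆ A[W⁻¹]` be the full
subcategory on the objects `N(b)` and `δ : B → B̃` the factorization of `γ ∘ N`.  If there
are zig-zags of natural weak equivalences `Id ⇝ N∘F` and `Id ⇝ F∘N`, then the inclusion
`j : B̃ → A[W⁻¹]` is an equivalence of categories and `δ` is a localization of `B` at
`W_B` up to equivalence:  every functor `H : B → D` inverting `W_B` factors through `δ`
up to natural isomorphism, uniquely up to natural isomorphism. -/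
theorem localization_up_to_equivalence
    (W : MorphismProperty A)
    (hiso : ∀ ⦃X Y : A⦄ (f : X ⟶ Y), IsIso f → W f)
    [W.HasTwoOutOfThreeProperty]
    (γ : A ⥤ A') [γ.IsLocalization W]
    (N : B ⥤ A) (F : A ⥤ B)
    (hNF : ZigzagWE W (𝟭 A) (F ⋙ N))
    (hFN : ZigzagWE (W.inverseImage N) (𝟭 B) (N ⋙ F)) :
    (ObjectProperty.ι _ : ImageSubcat γ N ⥤ A').IsEquivalence ∧
      ∀ (D : Type w) [Category.{w} D] (H : B ⥤ D),
        (∀ ⦃X Y : B⦄ (f : X ⟶ Y), W.inverseImage N f → IsIso (H.map f)) →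
          (∃ H' : ImageSubcat γ N ⥤ D, Nonempty (deltaFunctor γ N ⋙ H' ≅ H)) ∧
            ∀ H₁ H₂ : ImageSubcat γ N ⥤ D,
              Nonempty (deltaFunctor γ N ⋙ H₁ ≅ H) → Nonempty (deltaFunctor γ N ⋙ H₂ ≅ H) →
                Nonempty (H₁ ≅ H₂) := by
  have hγ : W.IsInvertedBy γ := Localization.inverts γ W
  obtain ⟨eA⟩ : Nonempty ((𝟭 A ⋙ γ) ≅ (F ⋙ N) ⋙ γ) :=
    hNF.isoComp γ (fun _ _ f hf => hγ f hf)
  haveI := Localization.essSurj γ W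
  haveI hES : (ObjectProperty.ι _ : ImageSubcat γ N ⥤ A').EssSurj := by
    constructor
    intro a'
    refine ⟨⟨(N ⋙ γ).obj (F.obj (γ.objPreimage a')), ⟨F.obj (γ.objPreimage a'), rfl⟩⟩, ⟨?_⟩⟩
    exact (eA.app (γ.objPreimage a')).symm ≪≫ γ.objObjPreimageIso a'
  have hEquiv : (ObjectProperty.ι _ : ImageSubcat γ N ⥤ A').IsEquivalence :=
    { }
  refine ⟨hEquiv, ?_⟩
  intro D _ H hH
  -- `F ⋙ H` inverts `W`
  have hFH : W.IsInvertedBy (F ⋙ H) := fun X Y f hf => by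
    have : W ((F ⋙ N).map f) := hNF.map_mem f hf
    exact hH (F.map f) this
  set L := Localization.lift (F ⋙ H) hFH γ with hL
  obtain ⟨eB⟩ : Nonempty ((𝟭 B ⋙ H) ≅ (N ⋙ F) ⋙ H) :=
    hFN.isoComp H (fun _ _ f hf => hH f hf)
  set j : ImageSubcat γ N ⥤ A' := ObjectProperty.ι _ with hj
  -- key iso for any G : A' ⥤ D with δ ⋙ j ⋙ G ≅ H
  constructor
  · refine ⟨j ⋙ L, ⟨?_⟩⟩
    -- deltaFunctor γ N ⋙ (j ⋙ L) = N ⋙ γ ⋙ L (defeq)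
    calc deltaFunctor γ N ⋙ (j ⋙ L) ≅ N ⋙ (γ ⋙ L) := Iso.refl _
      _ ≅ N ⋙ (F ⋙ H) := Functor.isoWhiskerLeft N (Localization.fac (F ⋙ H) hFH γ)
      _ ≅ 𝟭 B ⋙ H := eB.symm
      _ ≅ H := H.leftUnitor
  · rintro H₁ H₂ ⟨e₁⟩ ⟨e₂⟩
    haveI := hEquiv
    let Eqv := j.asEquivalence
    let G₁ : A' ⥤ D := Eqv.inverse ⋙ H₁
    let G₂ : A' ⥤ D := Eqv.inverse ⋙ H₂
    have h₁ : H₁ ≅ j ⋙ G₁ :=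
      H₁.leftUnitor.symm ≪≫ Functor.isoWhiskerRight Eqv.unitIso H₁ ≪≫ Functor.associator _ _ _
    have h₂ : H₂ ≅ j ⋙ G₂ :=
      H₂.leftUnitor.symm ≪≫ Functor.isoWhiskerRight Eqv.unitIso H₂ ≪≫ Functor.associator _ _ _
    have u₁ : (N ⋙ γ) ⋙ G₁ ≅ H :=
      (Functor.isoWhiskerLeft (deltaFunctor γ N) h₁.symm : deltaFunctor γ N ⋙ (j ⋙ G₁) ≅ _) ≪≫ e₁
    have u₂ : (N ⋙ γ) ⋙ G₂ ≅ H :=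
      (Functor.isoWhiskerLeft (deltaFunctor γ N) h₂.symm : deltaFunctor γ N ⋙ (j ⋙ G₂) ≅ _) ≪≫ e₂
    have c₁ : γ ⋙ G₁ ≅ F ⋙ H :=
      (Functor.isoWhiskerRight eA G₁ : γ ⋙ G₁ ≅ ((F ⋙ N) ⋙ γ) ⋙ G₁) ≪≫
        (Functor.isoWhiskerLeft F u₁ : F ⋙ ((N ⋙ γ) ⋙ G₁) ≅ F ⋙ H)
    have c₂ : γ ⋙ G₂ ≅ F ⋙ H :=
      (Functor.isoWhiskerRight eA G₂ : γ ⋙ G₂ ≅ ((F ⋙ N) ⋙ γ) ⋙ G₂) ≪≫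
        (Functor.isoWhiskerLeft F u₂ : F ⋙ ((N ⋙ γ) ⋙ G₂) ≅ F ⋙ H)
    haveI : Localization.Lifting γ W (γ ⋙ G₁) G₁ := ⟨Iso.refl _⟩
    haveI : Localization.Lifting γ W (γ ⋙ G₂) G₂ := ⟨Iso.refl _⟩
    have eG : G₁ ≅ G₂ :=
      Localization.liftNatIso γ W (γ ⋙ G₁) (γ ⋙ G₂) G₁ G₂ (c₁ ≪≫ c₂.symm)
    exact ⟨h₁ ≪≫ Functor.isoWhiskerLeft j eG ≪≫ h₂.symm⟩
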